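/- The number of antichains of size i in the poset of integer points {(x,y) : y ≥ 1, 1 ≤ x ≤ n−1, y ≤ x} with componentwise partial order equals C(n, 2i), for 0 ≤ i ≤ n/2. -/

import Mathlib

/-- The poset of integer points (x,y) with 1 ≤ x ≤ n−1 and 1 ≤ y ≤ x. -/
def trianglePoset (n : ℕ) : Finset (ℕ × ℕ) :=
  (Finset.Icc 1 (n - 1) ×ˢ Finset.Icc 1 (n - 1)).filter (fun p => p.2 ≤ p.1)

/-- A finite set of lattice points is an antichain under the componentwise order. -/
def IsLatticeAntichain (A : Finset (ℕ × ℕ)) : Prop :=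
  ∀ p ∈ A, ∀ q ∈ A, p ≠ q → ¬(p.1 ≤ q.1 ∧ p.2 ≤ q.2)

instance : DecidablePred IsLatticeAntichain := fun A => by
  unfold IsLatticeAntichain; infer_instance

namespace AntichainAux

lemma mem_triangle {n : ℕ} {p : ℕ × ℕ} :
    p ∈ trianglePoset n ↔ (1 ≤ p.1 ∧ p.1 ≤ n - 1) ∧ (1 ≤ p.2 ∧ p.2 ≤ p.1) := by
  simp only [trianglePoset, Finset.mem_filter, Finset.mem_product, Finset.mem_Icc]
  omega

/-- The forward map from antichains to subsets of `[1, n]`. -/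
def phi (A : Finset (ℕ × ℕ)) : Finset ℕ :=
  A.image Prod.snd ∪ A.image (fun p => p.1 + 1)

lemma antichain_cases {A : Finset (ℕ × ℕ)} (hA : IsLatticeAntichain A)
    {p q : ℕ × ℕ} (hp : p ∈ A) (hq : q ∈ A) (hne : p ≠ q) :
    (p.1 < q.1 ∧ q.2 < p.2) ∨ (q.1 < p.1 ∧ p.2 < q.2) := by
  have h1 := hA p hp q hq hne
  have h2 := hA q hq p hp (Ne.symm hne)
  have h3 : p.1 ≠ q.1 ∨ p.2 ≠ q.2 := by
    by_contra h
    push_neg at h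
    exact hne (Prod.ext h.1 h.2)
  omega

lemma snd_le_fst {n : ℕ} {A : Finset (ℕ × ℕ)} (hT : A ⊆ trianglePoset n)
    (hA : IsLatticeAntichain A) {p q : ℕ × ℕ} (hp : p ∈ A) (hq : q ∈ A) :
    p.2 ≤ q.1 := by
  have h1 := (mem_triangle.mp (hT hp)).2.2
  have h2 := (mem_triangle.mp (hT hq)).2.2
  rcases eq_or_ne p q with rfl | hne
  · exact h1
  · rcases antichain_cases hA hp hq hne with h | h <;> omega

lemma snd_injOn {A : Finset (ℕ × ℕ)} (hA : IsLatticeAntichain A) :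
    Set.InjOn (Prod.snd : ℕ × ℕ → ℕ) ↑A := by
  intro p hp q hq h
  by_contra hne
  rcases antichain_cases hA hp hq hne with hc | hc <;> omega

lemma fst_injOn {A : Finset (ℕ × ℕ)} (hA : IsLatticeAntichain A) :
    Set.InjOn (fun p : ℕ × ℕ => p.1 + 1) ↑A := by
  intro p hp q hq h
  by_contra hne
  simp only at h
  rcases antichain_cases hA hp hq hne with hc | hc <;> omega

lemma phi_disjoint {n : ℕ} {A : Finset (ℕ × ℕ)} (hT : A ⊆ trianglePoset n)
    (hA : IsLatticeAntichain A) :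
    Disjoint (A.image Prod.snd) (A.image (fun p => p.1 + 1)) := by
  rw [Finset.disjoint_left]
  rintro a ha hb
  obtain ⟨p, hp, rfl⟩ := Finset.mem_image.mp ha
  obtain ⟨q, hq, hqe⟩ := Finset.mem_image.mp hb
  have := snd_le_fst hT hA hp hq
  omega

lemma phi_card {n : ℕ} {A : Finset (ℕ × ℕ)} (hT : A ⊆ trianglePoset n)
    (hA : IsLatticeAntichain A) : (phi A).card = 2 * A.card := by
  rw [phi, Finset.card_union_of_disjoint (phi_disjoint hT hA),
    Finset.card_image_of_injOn (snd_injOn hA),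
    Finset.card_image_of_injOn (fst_injOn hA)]
  ring

lemma phi_subset {n : ℕ} {A : Finset (ℕ × ℕ)} (hT : A ⊆ trianglePoset n) :
    phi A ⊆ Finset.Icc 1 n := by
  intro a ha
  rw [phi, Finset.mem_union] at ha
  rcases ha with ha | ha <;> obtain ⟨p, hp, rfl⟩ := Finset.mem_image.mp ha <;>
    have := mem_triangle.mp (hT hp) <;> rw [Finset.mem_Icc] <;> omega

/-- The inverse map: from a `2*i`-subset of `[1,n]` to an antichain. -/
def psi (i : ℕ) {S : Finset ℕ} (hS : S.card = 2 * i) : Finset (ℕ × ℕ) :=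
  (Finset.univ : Finset (Fin i)).image (fun j =>
    (S.orderEmbOfFin hS ⟨i + j.1, by have := j.isLt; omega⟩ - 1,
     S.orderEmbOfFin hS ⟨i - 1 - j.1, by have := j.isLt; omega⟩))

lemma exists_index {N : ℕ} {S : Finset ℕ} (hS : S.card = N) {t : ℕ} (ht : t ∈ S) :
    ∃ j, S.orderEmbOfFin hS j = t := by
  have h := Finset.range_orderEmbOfFin S hS
  rw [Set.ext_iff] at h
  exact (h t).mpr ht

lemma rank_lemma {N : ℕ} {S : Finset ℕ} (hS : S.card = N) (k : Fin N) :
    (S.filter (fun t => t < S.orderEmbOfFin hS k)).card = k.1 := by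
  have heq : S.filter (fun t => t < S.orderEmbOfFin hS k)
      = (Finset.Iio k).image (S.orderEmbOfFin hS) := by
    ext t
    simp only [Finset.mem_filter, Finset.mem_image, Finset.mem_Iio]
    constructor
    · rintro ⟨htS, htk⟩
      obtain ⟨j, rfl⟩ := exists_index hS htS
      exact ⟨j, (S.orderEmbOfFin hS).strictMono.lt_iff_lt.mp htk, rfl⟩
    · rintro ⟨j, hj, rfl⟩
      exact ⟨Finset.orderEmbOfFin_mem S hS j,
        (S.orderEmbOfFin hS).strictMono hj⟩
  rw [heq, Finset.card_image_of_injective _ (S.orderEmbOfFin hS).injective,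
    Fin.card_Iio]

section PsiLemmas

variable {n i : ℕ} {S : Finset ℕ}

lemma pair_mem_triangle (hS : S.card = 2 * i) (hSn : S ⊆ Finset.Icc 1 n)
    {a b : Fin (2 * i)} (hab : a < b) :
    (S.orderEmbOfFin hS b - 1, S.orderEmbOfFin hS a) ∈ trianglePoset n := by
  have h1 := hSn (Finset.orderEmbOfFin_mem S hS a)
  have h2 := hSn (Finset.orderEmbOfFin_mem S hS b)
  have hlt := (S.orderEmbOfFin hS).strictMono hab
  rw [Finset.mem_Icc] at h1 h2
  rw [mem_triangle]
  omega

lemma pair_incomp (hS : S.card = 2 * i) (hSn : S ⊆ Finset.Icc 1 n)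
    {a b c d : Fin (2 * i)}
    (h : (c < a ∧ b < d) ∨ (a < c ∧ d < b)) :
    ¬((S.orderEmbOfFin hS b - 1 ≤ S.orderEmbOfFin hS d - 1)
        ∧ (S.orderEmbOfFin hS a ≤ S.orderEmbOfFin hS c)) := by
  have hmono := (S.orderEmbOfFin hS).strictMono
  have h1 := hSn (Finset.orderEmbOfFin_mem S hS b)
  have h2 := hSn (Finset.orderEmbOfFin_mem S hS d)
  rw [Finset.mem_Icc] at h1 h2
  rcases h with ⟨hca, hbd⟩ | ⟨hac, hdb⟩
  · have := hmono hca
    omega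
  · have := hmono hac
    have := hmono hdb
    omega

lemma psi_mem_triangle (hS : S.card = 2 * i) (hSn : S ⊆ Finset.Icc 1 n)
    {p : ℕ × ℕ} (hp : p ∈ psi i hS) : p ∈ trianglePoset n := by
  obtain ⟨j, -, rfl⟩ := Finset.mem_image.mp hp
  exact pair_mem_triangle hS hSn (by have := j.isLt; exact Fin.mk_lt_mk.mpr (by omega))

lemma psi_antichain (hS : S.card = 2 * i) (hSn : S ⊆ Finset.Icc 1 n) :
    IsLatticeAntichain (psi i hS) := by
  intro p hp q hq hne
  obtain ⟨j, -, rfl⟩ := Finset.mem_image.mp hp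
  obtain ⟨k, -, rfl⟩ := Finset.mem_image.mp hq
  have hjk : j.1 ≠ k.1 := fun h => hne (congrArg
    (fun j : Fin i => (S.orderEmbOfFin hS ⟨i + j.1, by have := j.isLt; omega⟩ - 1,
      S.orderEmbOfFin hS ⟨i - 1 - j.1, by have := j.isLt; omega⟩)) (Fin.ext h))
  have hj := j.isLt
  have hk := k.isLt
  rcases lt_or_gt_of_ne hjk with h | h
  · exact pair_incomp hS hSn (Or.inl ⟨Fin.mk_lt_mk.mpr (by omega), Fin.mk_lt_mk.mpr (by omega)⟩)
  · exact pair_incomp hS hSn (Or.inr ⟨Fin.mk_lt_mk.mpr (by omega), Fin.mk_lt_mk.mpr (by omega)⟩)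

lemma psi_card (hS : S.card = 2 * i) : (psi i hS).card = i := by
  rw [psi, Finset.card_image_of_injective, Finset.card_univ, Fintype.card_fin]
  intro j k h
  have h2 := congrArg Prod.snd h
  simp only at h2
  have h3 := (S.orderEmbOfFin hS).injective h2
  rw [Fin.mk.injEq] at h3
  have := j.isLt
  have := k.isLt
  exact Fin.ext (by omega)

lemma phi_psi (hS : S.card = 2 * i) (hSn : S ⊆ Finset.Icc 1 n) :
    phi (psi i hS) = S := by
  have hpos : ∀ k : Fin (2 * i), 1 ≤ S.orderEmbOfFin hS k := fun k => by
    have := hSn (Finset.orderEmbOfFin_mem S hS k)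
    rw [Finset.mem_Icc] at this
    exact this.1
  apply Finset.Subset.antisymm
  · intro a ha
    rw [phi, Finset.mem_union] at ha
    rcases ha with ha | ha <;> obtain ⟨p, hp, rfl⟩ := Finset.mem_image.mp ha <;>
      obtain ⟨j, -, rfl⟩ := Finset.mem_image.mp hp
    · exact Finset.orderEmbOfFin_mem S hS _
    · simp only
      have := hpos ⟨i + j.1, by have := j.isLt; omega⟩
      have heq : S.orderEmbOfFin hS ⟨i + j.1, by have := j.isLt; omega⟩ - 1 + 1
          = S.orderEmbOfFin hS ⟨i + j.1, by have := j.isLt; omega⟩ := by omega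
      rw [heq]
      exact Finset.orderEmbOfFin_mem S hS _
  · intro a ha
    obtain ⟨k, rfl⟩ := exists_index hS ha
    have hk := k.isLt
    rw [phi, Finset.mem_union]
    rcases lt_or_ge k.1 i with h | h
    · left
      rw [Finset.mem_image]
      refine ⟨_, Finset.mem_image_of_mem _
        (Finset.mem_univ (⟨i - 1 - k.1, by omega⟩ : Fin i)), ?_⟩
      simp only
      exact congrArg (S.orderEmbOfFin hS)
        (Fin.ext (show i - 1 - (i - 1 - k.1) = k.1 by omega))
    · right
      rw [Finset.mem_image]
      refine ⟨_, Finset.mem_image_of_mem _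
        (Finset.mem_univ (⟨k.1 - i, by omega⟩ : Fin i)), ?_⟩
      simp only
      have hfe : S.orderEmbOfFin hS ⟨i + (k.1 - i), by omega⟩ = S.orderEmbOfFin hS k :=
        congrArg (S.orderEmbOfFin hS) (Fin.ext (show i + (k.1 - i) = k.1 by omega))
      have hp1 : 1 ≤ S.orderEmbOfFin hS k := hpos k
      calc S.orderEmbOfFin hS ⟨i + (k.1 - i), _⟩ - 1 + 1
          = S.orderEmbOfFin hS k - 1 + 1 := by rw [hfe]
        _ = S.orderEmbOfFin hS k := by omega

lemma psi_phi {A : Finset (ℕ × ℕ)} (hT : A ⊆ trianglePoset n)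
    (hA : IsLatticeAntichain A) (hAc : A.card = i)
    (hS : (phi A).card = 2 * i) : psi i hS = A := by
  refine (Finset.eq_of_subset_of_card_le (fun p hp => ?_)
    (by rw [psi_card hS, hAc])).symm
  -- locate p.2 and p.1 + 1 in phi A
  have hp2 : p.2 ∈ phi A := by
    rw [phi, Finset.mem_union]
    exact Or.inl (Finset.mem_image_of_mem _ hp)
  have hp1 : p.1 + 1 ∈ phi A := by
    rw [phi, Finset.mem_union]
    exact Or.inr (Finset.mem_image_of_mem _ hp)
  obtain ⟨k, hkk⟩ := exists_index hS hp2
  obtain ⟨m, hmm⟩ := exists_index hS hp1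
  -- rank computations
  have hrk := rank_lemma hS k
  have hrm := rank_lemma hS m
  rw [hkk] at hrk
  rw [hmm] at hrm
  -- split the filters
  have hsplit : ∀ P : ℕ → Prop, ∀ _ : DecidablePred P,
      ((phi A).filter P).card
        = ((A.image Prod.snd).filter P).card + ((A.image (fun q => q.1 + 1)).filter P).card := by
    intro P _
    rw [phi, Finset.filter_union, Finset.card_union_of_disjoint
      (Finset.disjoint_filter_filter (phi_disjoint hT hA))]
  -- count for p.2
  have hY2 : (A.image Prod.snd).filter (fun t => t < p.2)
      = (A.filter (fun q => q.2 < p.2)).image Prod.snd := by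
    ext t
    simp only [Finset.mem_filter, Finset.mem_image]
    constructor
    · rintro ⟨⟨q, hq, rfl⟩, hlt⟩
      exact ⟨q, ⟨hq, hlt⟩, rfl⟩
    · rintro ⟨q, ⟨hq, hlt⟩, rfl⟩
      exact ⟨⟨q, hq, rfl⟩, hlt⟩
  have hX2 : (A.image (fun q => q.1 + 1)).filter (fun t => t < p.2) = ∅ := by
    rw [Finset.filter_eq_empty_iff]
    rintro t ht
    obtain ⟨q, hq, rfl⟩ := Finset.mem_image.mp ht
    have := snd_le_fst hT hA hp hq
    omega
  have hY1 : (A.image Prod.snd).filter (fun t => t < p.1 + 1) = A.image Prod.snd := by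
    rw [Finset.filter_eq_self]
    intro t ht
    obtain ⟨q, hq, rfl⟩ := Finset.mem_image.mp ht
    have := snd_le_fst hT hA hq hp
    omega
  have hX1 : (A.image (fun q => q.1 + 1)).filter (fun t => t < p.1 + 1)
      = (A.filter (fun q => q.1 < p.1)).image (fun q => q.1 + 1) := by
    ext t
    simp only [Finset.mem_filter, Finset.mem_image]
    constructor
    · rintro ⟨⟨q, hq, rfl⟩, hlt⟩
      exact ⟨q, ⟨hq, by omega⟩, rfl⟩
    · rintro ⟨q, ⟨hq, hlt⟩, rfl⟩
      exact ⟨⟨q, hq, rfl⟩, by omega⟩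
  set cy := (A.filter (fun q => q.2 < p.2)).card with hcy
  set cx := (A.filter (fun q => q.1 < p.1)).card with hcx
  have hkval : k.1 = cy := by
    rw [← hrk, hsplit _ _, hY2, hX2,
      Finset.card_image_of_injOn ((snd_injOn hA).mono
        (Finset.coe_subset.mpr (Finset.filter_subset _ _)))]
    simp [hcy]
  have hmval : m.1 = i + cx := by
    rw [← hrm, hsplit _ _, hY1, hX1,
      Finset.card_image_of_injOn (snd_injOn hA),
      Finset.card_image_of_injOn ((fst_injOn hA).mono
        (Finset.coe_subset.mpr (Finset.filter_subset _ _))),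
      hAc]
  -- partition: cy + cx + 1 = i
  have hdisj : Disjoint (A.filter (fun q => q.2 < p.2)) (A.filter (fun q => q.1 < p.1)) := by
    rw [Finset.disjoint_left]
    rintro q hq1 hq2
    rw [Finset.mem_filter] at hq1 hq2
    rcases eq_or_ne q p with rfl | hne
    · omega
    · rcases antichain_cases hA hq1.1 hp hne with hc | hc <;> omega
  have hunion : A.filter (fun q => q.2 < p.2) ∪ A.filter (fun q => q.1 < p.1)
      = A.erase p := by
    rw [← Finset.filter_or]
    ext q
    simp only [Finset.mem_filter, Finset.mem_erase]
    constructor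
    · rintro ⟨hq, hor⟩
      refine ⟨?_, hq⟩
      rintro rfl
      omega
    · rintro ⟨hne, hq⟩
      refine ⟨hq, ?_⟩
      rcases antichain_cases hA hq hp hne with hc | hc <;> omega
  have hsum : cy + cx + 1 = i := by
    have h1 : cy + cx = (A.erase p).card := by
      rw [← hunion, Finset.card_union_of_disjoint hdisj]
    rw [Finset.card_erase_of_mem hp, hAc] at h1
    have hi1 : 1 ≤ i := by
      rw [← hAc]
      exact Finset.card_pos.mpr ⟨p, hp⟩
    omega
  -- now exhibit p as an element of psi
  rw [psi, Finset.mem_image]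
  refine ⟨⟨i - 1 - k.1, by omega⟩, Finset.mem_univ _, ?_⟩
  have pfa : i + (i - 1 - k.1) < 2 * i := by omega
  have pfb : i - 1 - (i - 1 - k.1) < 2 * i := by omega
  have e2 : (phi A).orderEmbOfFin hS ⟨i - 1 - (i - 1 - k.1), pfb⟩ = p.2 := by
    rw [← hkk]
    exact congrArg _ (Fin.ext (show i - 1 - (i - 1 - k.1) = k.1 by omega))
  have e1' : (phi A).orderEmbOfFin hS ⟨i + (i - 1 - k.1), pfa⟩ = p.1 + 1 := by
    rw [← hmm]
    exact congrArg _ (Fin.ext (show i + (i - 1 - k.1) = m.1 by omega))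
  have e1 : (phi A).orderEmbOfFin hS ⟨i + (i - 1 - k.1), pfa⟩ - 1 = p.1 := by omega
  exact Prod.ext e1 e2

end PsiLemmas

end AntichainAux

open AntichainAux in
/-- The number of antichains of size `i` in the poset
`{(x,y) : y ≥ 1, 1 ≤ x ≤ n−1, y ≤ x}` with componentwise order equals `C(n, 2i)`,
for `0 ≤ i ≤ n/2`. -/
theorem antichains_triangle (n i : ℕ) (hi : i ≤ n / 2) :
    (((trianglePoset n).powersetCard i).filter IsLatticeAntichain).card
      = n.choose (2 * i) := by
  classical
  have hIcc : (Finset.Icc 1 n).card = n := by rw [Nat.card_Icc]; omega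
  have hchoose : n.choose (2 * i) = (Finset.powersetCard (2 * i) (Finset.Icc 1 n)).card := by
    rw [Finset.card_powersetCard, hIcc]
  rw [hchoose]
  have hmem : ∀ A, A ∈ ((trianglePoset n).powersetCard i).filter IsLatticeAntichain ↔
      (A ⊆ trianglePoset n ∧ A.card = i) ∧ IsLatticeAntichain A := by
    intro A
    rw [Finset.mem_filter, Finset.mem_powersetCard]
  refine Finset.card_bij' (fun A _ => phi A)
    (fun S hS => psi i (S := S) (Finset.mem_powersetCard.mp hS).2) ?_ ?_ ?_ ?_
  · intro A hA
    obtain ⟨⟨hT, hAc⟩, hanti⟩ := (hmem A).mp hA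
    rw [Finset.mem_powersetCard]
    exact ⟨phi_subset hT, by rw [phi_card hT hanti, hAc]⟩
  · intro S hS
    obtain ⟨hSn, hSc⟩ := Finset.mem_powersetCard.mp hS
    rw [hmem]
    exact ⟨⟨fun p hp => psi_mem_triangle _ hSn hp, psi_card _⟩, psi_antichain _ hSn⟩
  · intro A hA
    obtain ⟨⟨hT, hAc⟩, hanti⟩ := (hmem A).mp hA
    exact psi_phi hT hanti hAc _
  · intro S hS
    obtain ⟨hSn, hSc⟩ := Finset.mem_powersetCard.mp hS
    exact phi_psi _ hSn
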